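/- Let A and B be parallel segments in ℝ² ⊆ ℝ³, each of length at least 1 (B the orthogonal projection of a segment v lying in a plane parallel to ℝ²). Suppose two arcs C₁, C₂ in ℝ², with C₁ joining endpoint A₁ of A to endpoint B₁ of B and C₂ joining A₂ to B₂, intersect at x, and length(C₁) + length(C₂) ≤ 2 + ε. Then dist(x, A) ≤ ε and dist(x, B) ≤ ε. -/

import Mathlib

lemma arith_mid_16 (u v d Y s t : ℝ) (hu0 : 0 ≤ u) (hv0 : 0 ≤ v)
    (ht0 : 0 ≤ t) (ht1 : t ≤ 1) (hs : u + v ≤ s)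
    (hu2 : u ^ 2 = Y ^ 2 + t ^ 2 * d ^ 2)
    (hv2 : v ^ 2 = Y ^ 2 + (1 - t) ^ 2 * d ^ 2) :
    Y ^ 2 ≤ s ^ 2 - d ^ 2 := by
  have hQnn : 0 ≤ Y ^ 2 + t * (1 - t) * d ^ 2 :=
    add_nonneg (sq_nonneg Y)
      (mul_nonneg (mul_nonneg ht0 (by linarith)) (sq_nonneg d))
  have huv2 : (u * v) ^ 2 = (Y ^ 2 + t * (1 - t) * d ^ 2) ^ 2 + (Y * d * (2 * t - 1)) ^ 2 := by
    rw [mul_pow, hu2, hv2]; ring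
  have huv : Y ^ 2 + t * (1 - t) * d ^ 2 ≤ u * v := by
    nlinarith [sq_nonneg (Y * d * (2 * t - 1)), mul_nonneg hu0 hv0]
  have hs0 : 0 ≤ s := le_trans (by linarith) hs
  have hexp : u ^ 2 + v ^ 2 + 2 * (u * v) ≤ s ^ 2 := by nlinarith [mul_nonneg hu0 hv0]
  nlinarith [sq_nonneg Y]

lemma arith_end_16 (u v d s : ℝ) (hu0 : 0 ≤ u) (hv0 : 0 ≤ v) (hs : u + v ≤ s)
    (h : u ^ 2 + d ^ 2 ≤ v ^ 2) : u ^ 2 ≤ s ^ 2 - d ^ 2 := by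
  nlinarith [mul_nonneg hu0 hv0]

/-- Ellipse bound: if `dist p a + dist p b ≤ s`, then the squared distance from `p`
to the segment `[a, b]` is at most `s ^ 2 - dist a b ^ 2`. -/
lemma ellipse_aux_16 {E : Type*} [NormedAddCommGroup E] [InnerProductSpace ℝ E]
    {a b p : E} (hab : a ≠ b) {s : ℝ}
    (hs : dist p a + dist p b ≤ s) :
    Metric.infDist p (segment ℝ a b) ^ 2 ≤ s ^ 2 - dist a b ^ 2 := by
  have hd0 : 0 < dist a b := dist_pos.mpr (by simpa using hab)
  set d : ℝ := dist a b with hdd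
  set u : ℝ := dist p a with hu
  set v : ℝ := dist p b with hv
  have hu0 : 0 ≤ u := dist_nonneg
  have hv0 : 0 ≤ v := dist_nonneg
  set t : ℝ := (inner ℝ (p - a) (b - a) : ℝ) / d ^ 2 with ht
  have hip : (inner ℝ (p - a) (b - a) : ℝ) = t * d ^ 2 := by
    rw [ht]; field_simp
  have hnd : ‖b - a‖ = d := by rw [hdd, dist_eq_norm, norm_sub_rev]
  have hnu : ‖p - a‖ = u := by rw [hu, dist_eq_norm]
  have hv2 : v ^ 2 = u ^ 2 - 2 * t * d ^ 2 + d ^ 2 := by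
    have hpb : p - b = (p - a) - (b - a) := by abel
    rw [hv, dist_eq_norm, hpb, norm_sub_sq_real, hip, hnd, hnu]
    ring
  have hInn : 0 ≤ Metric.infDist p (segment ℝ a b) := Metric.infDist_nonneg
  rcases le_or_gt t 0 with htle | htpos
  · have h1 : Metric.infDist p (segment ℝ a b) ≤ u :=
      Metric.infDist_le_dist_of_mem (left_mem_segment ℝ a b)
    have h2 : Metric.infDist p (segment ℝ a b) ^ 2 ≤ u ^ 2 := by nlinarith
    have h3 : u ^ 2 + d ^ 2 ≤ v ^ 2 := by
      nlinarith [mul_nonneg (neg_nonneg.mpr htle) (sq_nonneg d)]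
    linarith [arith_end_16 u v d s hu0 hv0 hs h3]
  rcases le_or_gt 1 t with htge | htlt
  · have h1 : Metric.infDist p (segment ℝ a b) ≤ v :=
      Metric.infDist_le_dist_of_mem (right_mem_segment ℝ a b)
    have h2 : Metric.infDist p (segment ℝ a b) ^ 2 ≤ v ^ 2 := by nlinarith
    have h3 : v ^ 2 + d ^ 2 ≤ u ^ 2 := by
      nlinarith [mul_nonneg (sub_nonneg.mpr htge) (sq_nonneg d)]
    linarith [arith_end_16 v u d s hv0 hu0 (by linarith) h3]
  · set q : E := a + t • (b - a) with hq
    have hqmem : q ∈ segment ℝ a b := by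
      rw [segment_eq_image']
      exact ⟨t, ⟨le_of_lt htpos, le_of_lt htlt⟩, rfl⟩
    set Y : ℝ := dist p q with hY
    have hY2 : Y ^ 2 = u ^ 2 - t ^ 2 * d ^ 2 := by
      have hpq : p - q = (p - a) - t • (b - a) := by rw [hq]; abel
      rw [hY, dist_eq_norm, hpq, norm_sub_sq_real, real_inner_smul_right, hip,
        norm_smul, hnd, hnu]
      simp only [Real.norm_eq_abs, mul_pow, sq_abs]
      ring
    have h1 : Metric.infDist p (segment ℝ a b) ≤ Y :=
      Metric.infDist_le_dist_of_mem hqmem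
    have h2 : Metric.infDist p (segment ℝ a b) ^ 2 ≤ Y ^ 2 := by nlinarith
    have key := arith_mid_16 u v d Y s t hu0 hv0 (le_of_lt htpos) (le_of_lt htlt) hs
      (by rw [hY2]; ring) (by rw [hv2, hY2]; ring)
    linarith

/-- Adding up the variations of the two subarcs cut at `t`. -/
lemma arc_split_16 {E : Type*} [PseudoEMetricSpace E] (γ : ℝ → E) {t : ℝ}
    (ht : t ∈ Set.Icc (0:ℝ) 1) :
    edist (γ 0) (γ t) + edist (γ t) (γ 1) ≤ eVariationOn γ (Set.Icc 0 1) := by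
  have h := eVariationOn.Icc_add_Icc γ (s := (Set.univ : Set ℝ)) ht.1 ht.2 (Set.mem_univ t)
  simp only [Set.univ_inter] at h
  rw [← h]
  exact add_le_add
    (eVariationOn.edist_le γ (Set.left_mem_Icc.mpr ht.1) (Set.right_mem_Icc.mpr ht.1))
    (eVariationOn.edist_le γ (Set.left_mem_Icc.mpr ht.2) (Set.right_mem_Icc.mpr ht.2))

lemma final_arith_16 (I dA dB e : ℝ) (hI : I ^ 2 ≤ (2 + e - dB) ^ 2 - dA ^ 2)
    (hA : 1 ≤ dA) (hB : 1 ≤ dB) (he : 0 ≤ e) (h1 : 0 ≤ 2 + e - dB) :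
    I ^ 2 ≤ e * (2 + e) := by
  nlinarith [sq_nonneg (2 + e - dB), mul_nonneg he h1]

/-- Two parallel segments of length ≥ 1 in the plane, joined by arcs C₁ (A₁→B₁)
and C₂ (A₂→B₂) meeting at x with total length at most 2 + ε: then x is within
√(ε(2+ε)) of each segment. -/
theorem stmt_16 (A₁ A₂ B₁ B₂ : EuclideanSpace ℝ (Fin 2))
    (hA : 1 ≤ dist A₁ A₂) (hB : 1 ≤ dist B₁ B₂)
    (hpar : ∃ k : ℝ, B₂ - B₁ = k • (A₂ - A₁))
    (γ₁ γ₂ : ℝ → EuclideanSpace ℝ (Fin 2)) (L₁ L₂ ε : ℝ) (hε : 0 ≤ ε)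
    (hc₁ : ContinuousOn γ₁ (Set.Icc 0 1)) (hc₂ : ContinuousOn γ₂ (Set.Icc 0 1))
    (h₁0 : γ₁ 0 = A₁) (h₁1 : γ₁ 1 = B₁)
    (h₂0 : γ₂ 0 = A₂) (h₂1 : γ₂ 1 = B₂)
    (hL₁ : eVariationOn γ₁ (Set.Icc 0 1) = ENNReal.ofReal L₁)
    (hL₂ : eVariationOn γ₂ (Set.Icc 0 1) = ENNReal.ofReal L₂)
    (hshort : L₁ + L₂ ≤ 2 + ε)
    (x : EuclideanSpace ℝ (Fin 2))
    (hx₁ : x ∈ γ₁ '' Set.Icc 0 1) (hx₂ : x ∈ γ₂ '' Set.Icc 0 1) :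
    Metric.infDist x (segment ℝ A₁ A₂) ≤ Real.sqrt (ε * (2 + ε)) ∧
      Metric.infDist x (segment ℝ B₁ B₂) ≤ Real.sqrt (ε * (2 + ε)) := by
  obtain ⟨t₁, ht₁, hxt₁⟩ := hx₁
  obtain ⟨t₂, ht₂, hxt₂⟩ := hx₂
  have hsq : 0 ≤ Real.sqrt (ε * (2 + ε)) := Real.sqrt_nonneg _
  have split₁ := arc_split_16 γ₁ ht₁
  have split₂ := arc_split_16 γ₂ ht₂
  rw [hxt₁, h₁0, h₁1, hL₁, edist_dist, edist_dist,
    ← ENNReal.ofReal_add dist_nonneg dist_nonneg] at split₁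
  rw [hxt₂, h₂0, h₂1, hL₂, edist_dist, edist_dist,
    ← ENNReal.ofReal_add dist_nonneg dist_nonneg] at split₂
  -- degenerate cases: if some Lᵢ < 0 then x coincides with both endpoints of γᵢ
  rcases lt_or_ge L₁ 0 with hL₁0 | hL₁0
  · have h0 : ENNReal.ofReal (dist A₁ x + dist x B₁) = 0 :=
      le_antisymm (by rw [ENNReal.ofReal_eq_zero.mpr hL₁0.le] at split₁; exact split₁)
        zero_le
    rw [ENNReal.ofReal_eq_zero] at h0
    have hxA : dist A₁ x = 0 := le_antisymm (by nlinarith [@dist_nonneg _ _ x B₁]) dist_nonneg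
    have hxB : dist x B₁ = 0 := le_antisymm (by nlinarith [@dist_nonneg _ _ A₁ x]) dist_nonneg
    rw [dist_eq_zero] at hxA
    rw [dist_eq_zero] at hxB
    constructor
    · calc Metric.infDist x (segment ℝ A₁ A₂) ≤ dist x A₁ :=
            Metric.infDist_le_dist_of_mem (left_mem_segment ℝ A₁ A₂)
        _ = 0 := by rw [← hxA, dist_self]
        _ ≤ _ := hsq
    · calc Metric.infDist x (segment ℝ B₁ B₂) ≤ dist x B₁ :=
            Metric.infDist_le_dist_of_mem (left_mem_segment ℝ B₁ B₂)
        _ = 0 := by rw [hxB, dist_self]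
        _ ≤ _ := hsq
  rcases lt_or_ge L₂ 0 with hL₂0 | hL₂0
  · have h0 : ENNReal.ofReal (dist A₂ x + dist x B₂) = 0 :=
      le_antisymm (by rw [ENNReal.ofReal_eq_zero.mpr hL₂0.le] at split₂; exact split₂)
        zero_le
    rw [ENNReal.ofReal_eq_zero] at h0
    have hxA : dist A₂ x = 0 := le_antisymm (by nlinarith [@dist_nonneg _ _ x B₂]) dist_nonneg
    have hxB : dist x B₂ = 0 := le_antisymm (by nlinarith [@dist_nonneg _ _ A₂ x]) dist_nonneg
    rw [dist_eq_zero] at hxA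
    rw [dist_eq_zero] at hxB
    constructor
    · calc Metric.infDist x (segment ℝ A₁ A₂) ≤ dist x A₂ :=
            Metric.infDist_le_dist_of_mem (right_mem_segment ℝ A₁ A₂)
        _ = 0 := by rw [← hxA, dist_self]
        _ ≤ _ := hsq
    · calc Metric.infDist x (segment ℝ B₁ B₂) ≤ dist x B₂ :=
            Metric.infDist_le_dist_of_mem (right_mem_segment ℝ B₁ B₂)
        _ = 0 := by rw [hxB, dist_self]
        _ ≤ _ := hsq
  -- main case
  have hd₁ : dist A₁ x + dist x B₁ ≤ L₁ := (ENNReal.ofReal_le_ofReal_iff hL₁0).mp split₁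
  have hd₂ : dist A₂ x + dist x B₂ ≤ L₂ := (ENNReal.ofReal_le_ofReal_iff hL₂0).mp split₂
  have htriA : dist A₁ A₂ ≤ dist A₁ x + dist A₂ x := by
    rw [dist_comm A₂ x]; exact dist_triangle _ _ _
  have htriB : dist B₁ B₂ ≤ dist x B₁ + dist x B₂ := by
    rw [dist_comm x B₁]; exact dist_triangle _ _ _
  have hAne : A₁ ≠ A₂ := by
    intro h; rw [h, dist_self] at hA; linarith
  have hBne : B₁ ≠ B₂ := by
    intro h; rw [h, dist_self] at hB; linarith
  have htgt : 0 ≤ ε * (2 + ε) := by nlinarith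
  constructor
  · have hsA : dist x A₁ + dist x A₂ ≤ 2 + ε - dist B₁ B₂ := by
      rw [dist_comm x A₁, dist_comm x A₂]; linarith
    have key := ellipse_aux_16 hAne hsA
    rw [Real.le_sqrt Metric.infDist_nonneg htgt]
    have h1 : 0 ≤ 2 + ε - dist B₁ B₂ :=
      le_trans (add_nonneg dist_nonneg dist_nonneg) hsA
    exact final_arith_16 _ _ _ _ key hA hB hε h1
  · have hsB : dist x B₁ + dist x B₂ ≤ 2 + ε - dist A₁ A₂ := by
      linarith
    have key := ellipse_aux_16 hBne hsB
    rw [Real.le_sqrt Metric.infDist_nonneg htgt]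
    have h1 : 0 ≤ 2 + ε - dist A₁ A₂ :=
      le_trans (add_nonneg dist_nonneg dist_nonneg) hsB
    exact final_arith_16 _ _ _ _ key hB hA hε h1
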